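/- For N distinct elements x_1,...,x_N of a field and m ≥ N-1, the sum ∑_{I=1}^{N} x_I^m / ∏_{J ≠ I}(x_I - x_J) equals the complete homogeneous symmetric polynomial h_{m-N+1}(x_1,...,x_N). -/

import Mathlib

open Polynomial Finset

section Aux

lemma reflect_sum' {R : Type*} [CommRing R] {ι : Type*} (s : Finset ι) (f : ι → R[X]) (N : ℕ) :
    reflect N (∑ i ∈ s, f i) = ∑ i ∈ s, reflect N (f i) := by
  classical
  induction s using Finset.cons_induction with
  | empty => simp [reflect_zero]
  | cons a s ha ih => rw [Finset.sum_cons, Finset.sum_cons, reflect_add, ih]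

lemma reflect_one_X_sub_C {R : Type*} [CommRing R] (a : R) :
    reflect 1 (X - C a) = 1 - C a * X := by
  rw [reflect_sub, reflect_one_X, reflect_C]
  ring

lemma reflect_prod_X_sub_C {R : Type*} [CommRing R] [IsDomain R] {ι : Type*} (s : Finset ι)
    (x : ι → R) : reflect s.card (∏ J ∈ s, (X - C (x J))) = ∏ J ∈ s, (1 - C (x J) * X) := by
  classical
  induction s using Finset.cons_induction with
  | empty => simp [reflect_one]
  | cons a s ha ih =>
    rw [Finset.prod_cons, Finset.card_cons, Finset.prod_cons, add_comm s.card 1,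
      reflect_mul (X - C (x a)) _ (natDegree_X_sub_C (x a)).le
        ((natDegree_prod_le s _).trans (by simp [natDegree_X_sub_C])),
      reflect_one_X_sub_C, ih]

lemma lagrange_id {K : Type*} [Field K] {N : ℕ} (x : Fin N → K) (hx : Function.Injective x)
    (hN : 0 < N) :
    ∑ I : Fin N, C (x I ^ (N - 1) / ∏ J ∈ Finset.univ.erase I, (x I - x J)) *
      ∏ J ∈ Finset.univ.erase I, (X - C (x J)) = (X : K[X]) ^ (N - 1) := by
  have hinj : Set.InjOn x (Finset.univ : Finset (Fin N)) := fun a _ b _ h => hx h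
  have hdeg : ((X : K[X]) ^ (N - 1)).degree < (Finset.univ : Finset (Fin N)).card := by
    simp only [degree_X_pow, card_univ, Fintype.card_fin]
    exact_mod_cast Nat.sub_lt hN one_pos
  have h := Lagrange.eq_interpolate (f := (X : K[X]) ^ (N - 1)) hinj hdeg
  rw [Lagrange.interpolate_apply] at h
  conv_rhs => rw [h]
  refine Finset.sum_congr rfl fun I _ => ?_
  rw [Lagrange.basis]
  simp only [Lagrange.basisDivisor]
  rw [eval_pow, eval_X, Finset.prod_mul_distrib, ← map_prod C (fun J => (x I - x J)⁻¹),
    ← mul_assoc, ← C_mul, Finset.prod_inv_distrib, div_eq_mul_inv]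

lemma key_poly {K : Type*} [Field K] {N : ℕ} (x : Fin N → K) (hx : Function.Injective x)
    (hN : 0 < N) :
    ∑ I : Fin N, C (x I ^ (N - 1) / ∏ J ∈ Finset.univ.erase I, (x I - x J)) *
      ∏ J ∈ Finset.univ.erase I, (1 - C (x J) * X) = (1 : K[X]) := by
  have hcard : ∀ I : Fin N, (Finset.univ.erase I).card = N - 1 := fun I => by
    rw [Finset.card_erase_of_mem (Finset.mem_univ I), Finset.card_univ, Fintype.card_fin]
  have h := congrArg (reflect (N - 1)) (lagrange_id x hx hN)
  rw [reflect_monomial, revAt_le le_rfl, Nat.sub_self, pow_zero, reflect_sum'] at h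
  refine Eq.trans (Finset.sum_congr rfl fun I _ => ?_) h
  have h2 : reflect (N - 1) (∏ J ∈ Finset.univ.erase I, (X - C (x J)))
      = ∏ J ∈ Finset.univ.erase I, (1 - C (x J) * X) := by
    rw [← hcard I]; exact reflect_prod_X_sub_C _ x
  rw [reflect_C_mul, h2]

lemma geom_inv {K : Type*} [Field K] (a : K) :
    (1 - PowerSeries.C a * PowerSeries.X) * PowerSeries.mk (fun n => a ^ n) = 1 := by
  ext n
  cases n with
  | zero => simp
  | succ n =>
    simp only [sub_mul, one_mul, map_sub, PowerSeries.coeff_mk, mul_assoc,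
      PowerSeries.coeff_C_mul, PowerSeries.coeff_succ_X_mul]
    rw [PowerSeries.coeff_one, if_neg (Nat.succ_ne_zero n), pow_succ]
    ring

lemma prod_geom_eq_sum {K : Type*} [Field K] {N : ℕ} (x : Fin N → K)
    (hx : Function.Injective x) (hN : 0 < N) :
    ∏ J : Fin N, PowerSeries.mk (fun n => x J ^ n)
      = ∑ I : Fin N, PowerSeries.C (x I ^ (N - 1) / ∏ J ∈ Finset.univ.erase I, (x I - x J)) *
          PowerSeries.mk (fun n => x I ^ n) := by
  have hcast := congrArg (Polynomial.coeToPowerSeries.ringHom (R := K)) (key_poly x hx hN)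
  simp only [map_sum, map_mul, map_prod, map_sub, map_one,
    Polynomial.coeToPowerSeries.ringHom_apply, Polynomial.coe_C, Polynomial.coe_X] at hcast
  calc ∏ J : Fin N, PowerSeries.mk (fun n => x J ^ n)
      = (∑ I : Fin N, PowerSeries.C (x I ^ (N - 1) / ∏ J ∈ Finset.univ.erase I, (x I - x J)) *
          ∏ J ∈ Finset.univ.erase I, (1 - PowerSeries.C (x J) * PowerSeries.X)) *
          ∏ J : Fin N, PowerSeries.mk (fun n => x J ^ n) := by rw [hcast, one_mul]
    _ = _ := by
        rw [Finset.sum_mul]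
        refine Finset.sum_congr rfl fun I _ => ?_
        rw [mul_assoc]
        congr 1
        rw [← Finset.mul_prod_erase _ _ (Finset.mem_univ I), mul_comm (PowerSeries.mk _),
          ← mul_assoc, ← Finset.prod_mul_distrib,
          Finset.prod_congr rfl (fun J _ => geom_inv (x J)), Finset.prod_const_one, one_mul]

end Aux

/-- The complete homogeneous symmetric polynomial of degree `n` evaluated at
`x_1, ..., x_N` (with `h_0 = 1`). -/
def hsymVal {K : Type*} [CommRing K] {N : ℕ} (n : ℕ) (x : Fin N → K) : K :=
  ∑ f ∈ Finset.univ.filter (fun f : Fin n → Fin N => ∀ i j : Fin n, i ≤ j → f i ≤ f j),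
    ∏ i : Fin n, x (f i)

lemma coeff_prod_geom {K : Type*} [CommRing K] {N : ℕ} (x : Fin N → K) (n : ℕ) :
    PowerSeries.coeff n (∏ J : Fin N, PowerSeries.mk (fun k => x J ^ k)) = hsymVal n x := by
  classical
  rw [PowerSeries.coeff_prod]
  simp only [PowerSeries.coeff_mk]
  rw [hsymVal, eq_comm]
  have huniv : (Finset.univ.val : Multiset (Fin n)) = ↑(List.finRange n) := rfl
  refine Finset.sum_bij
    (fun f _ => Multiset.toFinsupp (Multiset.map f (Finset.univ.val : Multiset (Fin n))))
    ?_ ?_ ?_ ?_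
  · -- membership
    intro f hf
    rw [Finset.mem_finsuppAntidiag]
    refine ⟨?_, Finset.subset_univ _⟩
    calc Finset.univ.sum ⇑(Multiset.toFinsupp (Multiset.map f Finset.univ.val))
        = (Multiset.toFinsupp (Multiset.map f Finset.univ.val)).sum (fun _ m => m) :=
          (Finsupp.sum_fintype (Multiset.toFinsupp (Multiset.map f Finset.univ.val))
            (fun _ m => m) (fun _ => rfl)).symm
      _ = Multiset.card (Finsupp.toMultiset (Multiset.toFinsupp (Multiset.map f Finset.univ.val))) :=
          (Finsupp.card_toMultiset _).symm
      _ = n := by rw [Multiset.toFinsupp_toMultiset]; simp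
  · -- injectivity
    intro f hf g hg hfg
    have h1 : Multiset.map f Finset.univ.val = Multiset.map g Finset.univ.val :=
      Multiset.toFinsupp.injective hfg
    rw [huniv, Multiset.map_coe, Multiset.map_coe, ← List.ofFn_eq_map, ← List.ofFn_eq_map,
      Multiset.coe_eq_coe] at h1
    have hf' : (List.ofFn f).Pairwise (· ≤ ·) :=
      List.pairwise_ofFn.2 fun i j hij => (Finset.mem_filter.1 hf).2 i j hij.le
    have hg' : (List.ofFn g).Pairwise (· ≤ ·) :=
      List.pairwise_ofFn.2 fun i j hij => (Finset.mem_filter.1 hg).2 i j hij.le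
    exact List.ofFn_injective (List.Perm.eq_of_pairwise' hf' hg' h1)
  · -- surjectivity
    intro l hl
    rw [Finset.mem_finsuppAntidiag] at hl
    set L := Multiset.sort (Finsupp.toMultiset l) (· ≤ ·) with hLdef
    have hLsorted : L.Pairwise (· ≤ ·) := Multiset.pairwise_sort _ _
    have hLlen : L.length = n := by
      rw [hLdef, Multiset.length_sort, Finsupp.card_toMultiset, ← hl.1]
      exact (Finsupp.sum_fintype _ _ (fun _ => rfl))
    have hofn : List.ofFn (fun i : Fin n => L.get (Fin.cast hLlen.symm i)) = L := by
      apply List.ext_get (by simp [hLlen])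
      intro i h1 h2
      simp [List.get_ofFn]
    refine ⟨fun i => L.get (Fin.cast hLlen.symm i), ?_, ?_⟩
    · rw [Finset.mem_filter]
      refine ⟨Finset.mem_univ _, fun i j hij => ?_⟩
      rcases eq_or_lt_of_le hij with h | h
      · rw [h]
      · exact List.Pairwise.rel_get_of_lt hLsorted
          (by simp only [Fin.lt_def, Fin.coe_cast]; exact h)
    · have hmap : Multiset.map (fun i : Fin n => L.get (Fin.cast hLlen.symm i)) Finset.univ.val
          = Finsupp.toMultiset l := by
        rw [huniv, Multiset.map_coe, ← List.ofFn_eq_map, hofn, hLdef, Multiset.sort_eq]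
      show Multiset.toFinsupp (Multiset.map (fun i : Fin n => L.get (Fin.cast hLlen.symm i))
        Finset.univ.val) = l
      rw [hmap, Finsupp.toMultiset_toFinsupp]
  · -- values
    intro f hf
    have h1 : ∏ i : Fin n, x (f i) = ((Multiset.map f Finset.univ.val).map x).prod := by
      rw [Multiset.map_map, Finset.prod_eq_multiset_prod]
      rfl
    rw [h1, Finset.prod_multiset_map_count]
    refine (Finset.prod_subset (Finset.subset_univ _) fun J _ hJ => ?_).trans
      (Finset.prod_congr rfl fun J _ => by rw [Multiset.toFinsupp_apply])
    rw [Multiset.count_eq_zero_of_notMem (by simpa using hJ), pow_zero]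

/-- For `N` distinct elements of a field of characteristic zero and `m ≥ N - 1`,
`∑_I x_I^m / ∏_{J ≠ I} (x_I - x_J) = h_{m - N + 1}(x_1, ..., x_N)`. -/
theorem lagrange_power_sum_complete_homogeneous {K : Type*} [Field K] [CharZero K] {N : ℕ}
    (x : Fin N → K) (hx : Function.Injective x) (m : ℕ) (hm : N ≤ m + 1) :
    ∑ I : Fin N, x I ^ m / ∏ J ∈ Finset.univ.erase I, (x I - x J)
      = hsymVal (m + 1 - N) x := by
  rcases Nat.eq_zero_or_pos N with rfl | hN
  · have he : IsEmpty (Fin (m + 1 - 0) → Fin 0) :=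
      ⟨fun f => (f ⟨0, by omega⟩).elim0⟩
    rw [hsymVal, @Finset.univ_eq_empty _ _ he, Finset.filter_empty, Finset.sum_empty]
    simp
  · have h := congrArg (PowerSeries.coeff (m + 1 - N)) (prod_geom_eq_sum x hx hN)
    rw [coeff_prod_geom, map_sum] at h
    rw [h]
    refine Finset.sum_congr rfl fun I _ => ?_
    rw [PowerSeries.coeff_C_mul, PowerSeries.coeff_mk, div_mul_eq_mul_div, ← pow_add]
    congr 2
    omega
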